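/- Let n be even and fix plant matrices A, B, C ∈ ℝ^{n×n}, B_w, D_w ∈ ℝ^{n×n_w}, C_z, D_z ∈ ℝ^{n_z×n}, γ > 0, and an invertible matrix S ∈ ℝ^{n×n}. If the controller matrices A_K^S, B_K1^S, B_K2^S, B_K3^S, C_K^S ∈ ℝ^{n×n} solve the quantum LQG problem with bound γ and commutation matrix Θ_K^S = S·diag_{n/2}(J)·Sᵀ (i.e. there exists a symmetric positive definite P with 𝒜^S P + P(𝒜^S)ᵀ + ℬ^S(ℬ^S)ᵀ = 0 and tr(𝒞^S P (𝒞^S)ᵀ) < γ for the corresponding closed-loop matrices, and the physical realizability constraints hold with Θ_K^S), then the matrices A_K = S⁻¹A_K^S S, B_Ki = S⁻¹B_Ki^S (i = 1,2,3), C_K = C_K^S S solve the quantum LQG problem with bound γ and the canonical commutation matrix Θ_K = diag_{n/2}(J). -/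

import Mathlib

noncomputable section
open Matrix

/-- The `n × n` block-diagonal matrix `diag(J, …, J)` with `n/2` copies of
`J = [[0,1],[-1,0]]` on the diagonal (for even `n`). -/
def Jblock (n : ℕ) : Matrix (Fin n) (Fin n) ℝ :=
  Matrix.of fun i j =>
    if i.val + 1 = j.val ∧ i.val % 2 = 0 then (1 : ℝ)
    else if j.val + 1 = i.val ∧ j.val % 2 = 0 then (-1 : ℝ) else 0

/-- Closed-loop `𝒜 = [[A, B C_K],[B_K3 C, A_K]]`. -/
def clA (n : ℕ) (A B C AK BK3 CK : Matrix (Fin n) (Fin n) ℝ) :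
    Matrix (Fin n ⊕ Fin n) (Fin n ⊕ Fin n) ℝ :=
  Matrix.fromBlocks A (B * CK) (BK3 * C) AK

/-- Closed-loop `ℬ = [[B_w, B, 0],[B_K3 D_w, B_K1, B_K2]]`. -/
def clB (n nw : ℕ) (B : Matrix (Fin n) (Fin n) ℝ) (Bw Dw : Matrix (Fin n) (Fin nw) ℝ)
    (BK1 BK2 BK3 : Matrix (Fin n) (Fin n) ℝ) :
    Matrix (Fin n ⊕ Fin n) (Fin nw ⊕ (Fin n ⊕ Fin n)) ℝ :=
  Matrix.fromBlocks Bw (Matrix.fromCols B 0) (BK3 * Dw) (Matrix.fromCols BK1 BK2)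

/-- Closed-loop `𝒞 = [C_z, D_z C_K]`. -/
def clC (n nz : ℕ) (Cz Dz : Matrix (Fin nz) (Fin n) ℝ)
    (CK : Matrix (Fin n) (Fin n) ℝ) : Matrix (Fin nz) (Fin n ⊕ Fin n) ℝ :=
  Matrix.fromCols Cz (Dz * CK)

/-- The physical realizability constraints with commutation matrix `Θ_K`. -/
def PhysReal (n : ℕ) (ΘK AK BK1 BK2 BK3 CK : Matrix (Fin n) (Fin n) ℝ) : Prop :=
  AK * ΘK + ΘK * AKᵀ
      + BK1 * Jblock n * BK1ᵀ + BK2 * Jblock n * BK2ᵀ + BK3 * Jblock n * BK3ᵀ = 0 ∧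
  BK1 = ΘK * CKᵀ * Jblock n

/-- Conjugation of a positive definite real matrix by an invertible matrix. -/
lemma posDef_conj_aux {m : Type*} [Fintype m] [DecidableEq m]
    {P T : Matrix m m ℝ} (hP : P.PosDef) (hT : IsUnit T) :
    (T * P * Tᵀ).PosDef := by
  refine Matrix.posDef_iff_dotProduct_mulVec.mpr ⟨?_, ?_⟩
  · have := Matrix.isHermitian_mul_mul_conjTranspose T hP.1
    simpa using this
  · intro x hx
    have hy : Tᵀ *ᵥ x ≠ 0 := by
      intro h
      apply hx
      have hinj : Function.Injective (Tᵀ).mulVec :=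
        Matrix.mulVec_injective_iff_isUnit.mpr ((Matrix.isUnit_transpose T).mpr hT)
      have : Tᵀ *ᵥ x = Tᵀ *ᵥ 0 := by simpa using h
      exact hinj this
    have h2 := hP.dotProduct_mulVec_pos hy
    have key : dotProduct (star x) ((T * P * Tᵀ) *ᵥ x)
        = dotProduct (star (Tᵀ *ᵥ x)) (P *ᵥ (Tᵀ *ᵥ x)) := by
      simp only [star_trivial, ← Matrix.mulVec_mulVec, Matrix.dotProduct_mulVec,
        Matrix.mulVec_transpose]
    rw [key]
    exact h2

/-- Remark 1 of the paper: a solution of the quantum LQG problem with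
bound `γ` and commutation matrix `Θ_K^S = S·diag_{n/2}(J)·Sᵀ` transforms, via
`A_K = S⁻¹A_K^S S`, `B_Ki = S⁻¹B_Ki^S`, `C_K = C_K^S S`, into a solution with the
canonical commutation matrix `Θ_K = diag_{n/2}(J)`. -/

theorem quantum_lqg_rescaled_commutation
    (n nw nz : ℕ) (hne : Even n)
    (A B C : Matrix (Fin n) (Fin n) ℝ)
    (Bw Dw : Matrix (Fin n) (Fin nw) ℝ)
    (Cz Dz : Matrix (Fin nz) (Fin n) ℝ)
    (γ : ℝ) (hγ : 0 < γ)
    (S : Matrix (Fin n) (Fin n) ℝ) (hS : IsUnit S.det)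
    (AKS BK1S BK2S BK3S CKS : Matrix (Fin n) (Fin n) ℝ)
    (hlqg : ∃ P : Matrix (Fin n ⊕ Fin n) (Fin n ⊕ Fin n) ℝ, P.PosDef ∧
      clA n A B C AKS BK3S CKS * P + P * (clA n A B C AKS BK3S CKS)ᵀ
        + clB n nw B Bw Dw BK1S BK2S BK3S * (clB n nw B Bw Dw BK1S BK2S BK3S)ᵀ = 0 ∧
      (clC n nz Cz Dz CKS * P * (clC n nz Cz Dz CKS)ᵀ).trace < γ)
    (hpr : PhysReal n (S * Jblock n * Sᵀ) AKS BK1S BK2S BK3S CKS) :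
    -- the transformed controller
    let AK := S⁻¹ * AKS * S
    let BK1 := S⁻¹ * BK1S
    let BK2 := S⁻¹ * BK2S
    let BK3 := S⁻¹ * BK3S
    let CK := CKS * S
    (∃ P' : Matrix (Fin n ⊕ Fin n) (Fin n ⊕ Fin n) ℝ, P'.PosDef ∧
      clA n A B C AK BK3 CK * P' + P' * (clA n A B C AK BK3 CK)ᵀ
        + clB n nw B Bw Dw BK1 BK2 BK3 * (clB n nw B Bw Dw BK1 BK2 BK3)ᵀ = 0 ∧
      (clC n nz Cz Dz CK * P' * (clC n nz Cz Dz CK)ᵀ).trace < γ) ∧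
    PhysReal n (Jblock n) AK BK1 BK2 BK3 CK := by
  intro AK BK1 BK2 BK3 CK
  obtain ⟨P, hP, heq, htr⟩ := hlqg
  have hST : S⁻¹ * S = 1 := Matrix.nonsing_inv_mul S hS
  have hTS : S * S⁻¹ = 1 := Matrix.mul_nonsing_inv S hS
  have hSTt : Sᵀ * S⁻¹ᵀ = 1 := by
    rw [← Matrix.transpose_mul, hST, Matrix.transpose_one]
  have hTSt : S⁻¹ᵀ * Sᵀ = 1 := by
    rw [← Matrix.transpose_mul, hTS, Matrix.transpose_one]
  set T : Matrix (Fin n ⊕ Fin n) (Fin n ⊕ Fin n) ℝ :=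
    Matrix.fromBlocks 1 0 0 S⁻¹ with hT
  set Ti : Matrix (Fin n ⊕ Fin n) (Fin n ⊕ Fin n) ℝ :=
    Matrix.fromBlocks 1 0 0 S with hTi
  have hTTi : T * Ti = 1 := by
    rw [hT, hTi, Matrix.fromBlocks_multiply]
    simp [hST, Matrix.fromBlocks_one]
  have hTiT : Ti * T = 1 := by
    rw [hT, hTi, Matrix.fromBlocks_multiply]
    simp [hTS, Matrix.fromBlocks_one]
  have hTu : IsUnit T := ⟨⟨T, Ti, hTTi, hTiT⟩, rfl⟩
  have hTtTit : Tᵀ * Tiᵀ = 1 := by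
    rw [← Matrix.transpose_mul, hTiT, Matrix.transpose_one]
  -- transformation identities for the closed-loop matrices
  have hA : clA n A B C AK BK3 CK = T * clA n A B C AKS BK3S CKS * Ti := by
    show clA n A B C (S⁻¹ * AKS * S) (S⁻¹ * BK3S) (CKS * S) = _
    rw [hT, hTi]
    simp [clA, Matrix.fromBlocks_multiply, Matrix.mul_assoc]
  have hB : clB n nw B Bw Dw BK1 BK2 BK3 = T * clB n nw B Bw Dw BK1S BK2S BK3S := by
    show clB n nw B Bw Dw (S⁻¹ * BK1S) (S⁻¹ * BK2S) (S⁻¹ * BK3S) = _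
    rw [hT]
    simp [clB, Matrix.fromBlocks_multiply, Matrix.mul_fromCols, Matrix.mul_assoc]
  have hC : clC n nz Cz Dz CK = clC n nz Cz Dz CKS * Ti := by
    show clC n nz Cz Dz (CKS * S) = _
    rw [hTi]
    simp [clC, Matrix.fromCols_mul_fromBlocks, Matrix.mul_assoc]
  set 𝒜 := clA n A B C AKS BK3S CKS
  set ℬ := clB n nw B Bw Dw BK1S BK2S BK3S
  set 𝒞 := clC n nz Cz Dz CKS
  refine ⟨⟨T * P * Tᵀ, posDef_conj_aux hP hTu, ?_, ?_⟩, ?_, ?_⟩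
  · rw [hA, hB]
    have e1 : T * 𝒜 * Ti * (T * P * Tᵀ) = T * (𝒜 * P) * Tᵀ := by
      simp only [Matrix.mul_assoc]
      rw [show Ti * (T * (P * Tᵀ)) = P * Tᵀ by
        rw [← Matrix.mul_assoc, hTiT, Matrix.one_mul]]
    have e2 : T * P * Tᵀ * (T * 𝒜 * Ti)ᵀ = T * (P * 𝒜ᵀ) * Tᵀ := by
      simp only [Matrix.transpose_mul, Matrix.mul_assoc]
      rw [show Tᵀ * (Tiᵀ * (𝒜ᵀ * Tᵀ)) = 𝒜ᵀ * Tᵀ by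
        rw [← Matrix.mul_assoc, hTtTit, Matrix.one_mul]]
    have e3 : T * ℬ * (T * ℬ)ᵀ = T * (ℬ * ℬᵀ) * Tᵀ := by
      simp only [Matrix.transpose_mul, Matrix.mul_assoc]
    rw [e1, e2, e3]
    have : T * (𝒜 * P) * Tᵀ + T * (P * 𝒜ᵀ) * Tᵀ + T * (ℬ * ℬᵀ) * Tᵀ
        = T * (𝒜 * P + P * 𝒜ᵀ + ℬ * ℬᵀ) * Tᵀ := by
      simp [Matrix.mul_add, Matrix.add_mul]
    rw [this, heq, Matrix.mul_zero, Matrix.zero_mul]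
  · rw [hC]
    have : 𝒞 * Ti * (T * P * Tᵀ) * (𝒞 * Ti)ᵀ = 𝒞 * P * 𝒞ᵀ := by
      simp only [Matrix.transpose_mul, Matrix.mul_assoc]
      rw [show Ti * (T * (P * (Tᵀ * (Tiᵀ * 𝒞ᵀ)))) = P * 𝒞ᵀ by
        rw [← Matrix.mul_assoc Ti T, hTiT, Matrix.one_mul,
          ← Matrix.mul_assoc Tᵀ Tiᵀ, hTtTit, Matrix.one_mul]]
    rw [this]
    exact htr
  · -- physical realizability: the Lyapunov-type equation
    show S⁻¹ * AKS * S * Jblock n + Jblock n * (S⁻¹ * AKS * S)ᵀ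
        + S⁻¹ * BK1S * Jblock n * (S⁻¹ * BK1S)ᵀ
        + S⁻¹ * BK2S * Jblock n * (S⁻¹ * BK2S)ᵀ
        + S⁻¹ * BK3S * Jblock n * (S⁻¹ * BK3S)ᵀ = 0
    have h1 := hpr.1
    have h := congrArg (fun M => S⁻¹ * M * S⁻¹ᵀ) h1
    simp only [Matrix.mul_add, Matrix.add_mul, Matrix.mul_zero, Matrix.zero_mul] at h
    have c1 : ∀ X : Matrix (Fin n) (Fin n) ℝ, S⁻¹ * (S * X) = X := fun X => by
      rw [← Matrix.mul_assoc, hST, Matrix.one_mul]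
    have c2 : ∀ X : Matrix (Fin n) (Fin n) ℝ, Sᵀ * (S⁻¹ᵀ * X) = X := fun X => by
      rw [← Matrix.mul_assoc, hSTt, Matrix.one_mul]
    have hSTt' : Sᵀ * Sᵀ⁻¹ = 1 := by
      rw [← Matrix.transpose_nonsing_inv]; exact hSTt
    calc S⁻¹ * AKS * S * Jblock n + Jblock n * (S⁻¹ * AKS * S)ᵀ
        + S⁻¹ * BK1S * Jblock n * (S⁻¹ * BK1S)ᵀ
        + S⁻¹ * BK2S * Jblock n * (S⁻¹ * BK2S)ᵀ
        + S⁻¹ * BK3S * Jblock n * (S⁻¹ * BK3S)ᵀ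
        = S⁻¹ * (AKS * (S * Jblock n * Sᵀ)) * S⁻¹ᵀ
          + S⁻¹ * (S * Jblock n * Sᵀ * AKSᵀ) * S⁻¹ᵀ
          + S⁻¹ * (BK1S * Jblock n * BK1Sᵀ) * S⁻¹ᵀ
          + S⁻¹ * (BK2S * Jblock n * BK2Sᵀ) * S⁻¹ᵀ
          + S⁻¹ * (BK3S * Jblock n * BK3Sᵀ) * S⁻¹ᵀ := by
          simp only [Matrix.transpose_mul, Matrix.transpose_nonsing_inv, Matrix.mul_assoc,
            c1, c2, hSTt, hSTt', Matrix.mul_one]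
      _ = 0 := h
  · -- physical realizability: the B_K1 relation
    show S⁻¹ * BK1S = Jblock n * (CKS * S)ᵀ * Jblock n
    rw [hpr.2]
    have c1 : ∀ X : Matrix (Fin n) (Fin n) ℝ, S⁻¹ * (S * X) = X := fun X => by
      rw [← Matrix.mul_assoc, hST, Matrix.one_mul]
    simp only [Matrix.transpose_mul, Matrix.mul_assoc, c1]
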